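/- Let w ∈ C³ on a rectangle containing two congruent triangles K_{i−1} and K_i, where K_{i−1} has vertices (x_{i−1},y_j), (x_i,y_j), (x_{i−1},y_{j+1}) and K_i has vertices (x_i,y_j), (x_{i+1},y_j), (x_i,y_{j+1}), with equal horizontal steps h_x = x_i − x_{i−1} = x_{i+1} − x_i and vertical step h_y = y_{j+1} − y_j. Then |∫_{K_{i−1}} (w − w^I) − ∫_{K_i} (w − w^I)| ≤ C Σ_{l+m=3} h_x^{l+1} h_y^{m+1} ‖∂_x^l ∂_y^m w‖_{L^∞(K_{i−1} ∪ K_i)}, where w^I denotes the piecewise-linear interpolant of w at the vertices of each triangle and C is a constant independent of w, h_x, h_y. -/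

import Mathlib

open MeasureTheory Set

noncomputable def pdx (f : ℝ × ℝ → ℝ) : ℝ × ℝ → ℝ := fun p => deriv (fun t => f (t, p.2)) p.1

noncomputable def pdy (f : ℝ × ℝ → ℝ) : ℝ × ℝ → ℝ := fun p => deriv (fun t => f (p.1, t)) p.2

/-- the closed right triangle with vertices `(xi,yj)`, `(xi+hx,yj)`, `(xi,yj+hy)` -/
def tri (xi yj hx hy : ℝ) : Set (ℝ × ℝ) :=
  {p | xi ≤ p.1 ∧ yj ≤ p.2 ∧ (p.1 - xi) / hx + (p.2 - yj) / hy ≤ 1}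

/-- the affine interpolant of `w` at the vertices of `tri xi yj hx hy` -/
noncomputable def interp (w : ℝ × ℝ → ℝ) (xi yj hx hy : ℝ) : ℝ × ℝ → ℝ :=
  fun p => w (xi, yj) * (1 - (p.1 - xi) / hx - (p.2 - yj) / hy)
    + w (xi + hx, yj) * ((p.1 - xi) / hx) + w (xi, yj + hy) * ((p.2 - yj) / hy)

/-! ### One-dimensional mean-value / Taylor estimates -/

lemma mvt_uIcc {g g' : ℝ → ℝ} (hg : ∀ t, HasDerivAt g (g' t) t)
    {a b C : ℝ} (hC : ∀ t ∈ uIcc a b, |g' t| ≤ C) :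
    |g b - g a| ≤ C * |b - a| := by
  have := Convex.norm_image_sub_le_of_norm_hasDerivWithin_le
    (f := g) (f' := g') (s := uIcc a b)
    (fun x _ => (hg x).hasDerivWithinAt) (fun x hx => hC x hx)
    (convex_uIcc a b) left_mem_uIcc right_mem_uIcc
  simpa [Real.norm_eq_abs] using this

lemma abs_sub_le_of_uIcc {a b t : ℝ} (ht : t ∈ uIcc a b) : |t - a| ≤ |b - a| := by
  rcases le_total a b with h | h
  · rw [uIcc_of_le h] at ht
    rw [abs_of_nonneg (by linarith [ht.1]), abs_of_nonneg (by linarith)]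
    linarith [ht.2]
  · rw [uIcc_of_ge h] at ht
    rw [abs_of_nonpos (by linarith [ht.2]), abs_of_nonpos (by linarith)]
    linarith [ht.1]

lemma taylor1 {φ φ' : ℝ → ℝ} (hφ : ∀ t, HasDerivAt φ (φ' t) t) {a b M : ℝ}
    (hM : ∀ t ∈ uIcc a b, |φ' t| ≤ M) : |φ b - φ a| ≤ M * |b - a| := mvt_uIcc hφ hM

lemma taylor2 {φ φ' φ'' : ℝ → ℝ} (hφ : ∀ t, HasDerivAt φ (φ' t) t)
    (hφ' : ∀ t, HasDerivAt φ' (φ'' t) t) {a b M : ℝ} (hM : ∀ t ∈ uIcc a b, |φ'' t| ≤ M) :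
    |φ b - φ a - (b - a) * φ' a| ≤ M * |b - a| ^ 2 := by
  have hM0 : 0 ≤ M := le_trans (abs_nonneg _) (hM a left_mem_uIcc)
  set g := fun t => φ t - φ a - (t - a) * φ' a with hgdef
  have hg : ∀ t, HasDerivAt g (φ' t - φ' a) t := fun t => by
    have h := ((hφ t).sub_const (φ a)).sub (((hasDerivAt_id t).sub_const a).mul_const (φ' a))
    simpa [Pi.sub_def] using h
  have key : ∀ t ∈ uIcc a b, |φ' t - φ' a| ≤ M * |b - a| := fun t ht => by
    have h1 := taylor1 hφ' (a := a) (b := t) (M := M)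
      (fun s hs => hM s (uIcc_subset_uIcc left_mem_uIcc ht hs))
    calc |φ' t - φ' a| ≤ M * |t - a| := h1
      _ ≤ M * |b - a| := mul_le_mul_of_nonneg_left (abs_sub_le_of_uIcc ht) hM0
  have h2 := mvt_uIcc hg key (a := a) (b := b)
  have hga : g a = 0 := by simp [hgdef]
  rw [hga, sub_zero] at h2
  calc |φ b - φ a - (b - a) * φ' a| = |g b| := rfl
    _ ≤ M * |b - a| * |b - a| := h2
    _ = M * |b - a| ^ 2 := by ring

lemma taylor3 {φ φ' φ'' φ''' : ℝ → ℝ} (hφ : ∀ t, HasDerivAt φ (φ' t) t)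
    (hφ' : ∀ t, HasDerivAt φ' (φ'' t) t) (hφ'' : ∀ t, HasDerivAt φ'' (φ''' t) t)
    {a b M : ℝ} (hM : ∀ t ∈ uIcc a b, |φ''' t| ≤ M) :
    |φ b - φ a - (b - a) * φ' a - (b - a) ^ 2 / 2 * φ'' a| ≤ M * |b - a| ^ 3 := by
  have hM0 : 0 ≤ M := le_trans (abs_nonneg _) (hM a left_mem_uIcc)
  set g := fun t => φ t - φ a - (t - a) * φ' a - (t - a) ^ 2 / 2 * φ'' a with hgdef
  have hg : ∀ t, HasDerivAt g (φ' t - φ' a - (t - a) * φ'' a) t := fun t => by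
    have hsq : HasDerivAt (fun t => (t - a) ^ 2 / 2 * φ'' a) ((t - a) * φ'' a) t := by
      have h0 : HasDerivAt (fun t : ℝ => (t - a) ^ 2) (2 * (t - a)) t := by
        simpa [Pi.pow_def] using ((hasDerivAt_id t).sub_const a).pow 2
      have := (h0.div_const 2).mul_const (φ'' a)
      exact this.congr_deriv (by ring)
    have h := (((hφ t).sub_const (φ a)).sub
      (((hasDerivAt_id t).sub_const a).mul_const (φ' a))).sub hsq
    simpa [Pi.sub_def] using h
  have key : ∀ t ∈ uIcc a b, |φ' t - φ' a - (t - a) * φ'' a| ≤ M * |b - a| ^ 2 := fun t ht => by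
    have h1 := taylor2 hφ' hφ'' (a := a) (b := t) (M := M)
      (fun s hs => hM s (uIcc_subset_uIcc left_mem_uIcc ht hs))
    calc |φ' t - φ' a - (t - a) * φ'' a| ≤ M * |t - a| ^ 2 := h1
      _ ≤ M * |b - a| ^ 2 := by
        have := abs_sub_le_of_uIcc ht
        have h3 : |t - a| ^ 2 ≤ |b - a| ^ 2 := pow_le_pow_left₀ (abs_nonneg _) this 2
        exact mul_le_mul_of_nonneg_left h3 hM0
  have h2 := mvt_uIcc hg key (a := a) (b := b)
  have hga : g a = 0 := by simp [hgdef]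
  rw [hga, sub_zero] at h2
  calc |φ b - φ a - (b - a) * φ' a - (b - a) ^ 2 / 2 * φ'' a| = |g b| := rfl
    _ ≤ M * |b - a| ^ 2 * |b - a| := h2
    _ = M * |b - a| ^ 3 := by ring

/-! ### Calculus of the partial derivative operators `pdx`, `pdy` -/

lemma hasDerivAt_slice_x {f : ℝ × ℝ → ℝ} (hf : Differentiable ℝ f) (x y : ℝ) :
    HasDerivAt (fun s => f (s, y)) (pdx f (x, y)) x := by
  have hdiff : DifferentiableAt ℝ (fun s : ℝ => f (s, y)) x :=
    (hf (x, y)).comp x (differentiableAt_id.prodMk (differentiableAt_const y))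
  simpa [pdx] using hdiff.hasDerivAt

lemma hasDerivAt_slice_y {f : ℝ × ℝ → ℝ} (hf : Differentiable ℝ f) (x y : ℝ) :
    HasDerivAt (fun t => f (x, t)) (pdy f (x, y)) y := by
  have hdiff : DifferentiableAt ℝ (fun t : ℝ => f (x, t)) y :=
    (hf (x, y)).comp y ((differentiableAt_const x).prodMk differentiableAt_id)
  simpa [pdy] using hdiff.hasDerivAt

lemma pdx_fderiv {f : ℝ × ℝ → ℝ} {p : ℝ × ℝ} (hf : DifferentiableAt ℝ f p) :
    pdx f p = fderiv ℝ f p (1, 0) := by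
  have hc : HasDerivAt (fun s : ℝ => ((s, p.2) : ℝ × ℝ)) ((1 : ℝ), (0 : ℝ)) p.1 :=
    (hasDerivAt_id p.1).prodMk (hasDerivAt_const p.1 p.2)
  have h : HasDerivAt (fun s : ℝ => f (s, p.2)) (fderiv ℝ f p (1, 0)) p.1 := by
    have := hf.hasFDerivAt.comp_hasDerivAt p.1 hc
    simpa [Function.comp_def] using this
  exact h.deriv

lemma pdy_fderiv {f : ℝ × ℝ → ℝ} {p : ℝ × ℝ} (hf : DifferentiableAt ℝ f p) :
    pdy f p = fderiv ℝ f p (0, 1) := by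
  have hc : HasDerivAt (fun t : ℝ => ((p.1, t) : ℝ × ℝ)) ((0 : ℝ), (1 : ℝ)) p.2 :=
    (hasDerivAt_const p.2 p.1).prodMk (hasDerivAt_id p.2)
  have h : HasDerivAt (fun t : ℝ => f (p.1, t)) (fderiv ℝ f p (0, 1)) p.2 := by
    have := hf.hasFDerivAt.comp_hasDerivAt p.2 hc
    simpa [Function.comp_def] using this
  exact h.deriv

lemma contDiff_pdx {f : ℝ × ℝ → ℝ} {n : ℕ∞} (hf : ContDiff ℝ (n + 1) f) :
    ContDiff ℝ n (pdx f) := by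
  have hdf : Differentiable ℝ f := hf.differentiable (by simp)
  have e : pdx f = fun p => fderiv ℝ f p ((1 : ℝ), (0 : ℝ)) :=
    funext fun p => pdx_fderiv (hdf p)
  rw [e]
  exact (hf.fderiv_right le_rfl).clm_apply contDiff_const

lemma contDiff_pdy {f : ℝ × ℝ → ℝ} {n : ℕ∞} (hf : ContDiff ℝ (n + 1) f) :
    ContDiff ℝ n (pdy f) := by
  have hdf : Differentiable ℝ f := hf.differentiable (by simp)
  have e : pdy f = fun p => fderiv ℝ f p ((0 : ℝ), (1 : ℝ)) :=
    funext fun p => pdy_fderiv (hdf p)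
  rw [e]
  exact (hf.fderiv_right le_rfl).clm_apply contDiff_const

lemma clairaut {f : ℝ × ℝ → ℝ} (hf : ContDiff ℝ 2 f) : pdx (pdy f) = pdy (pdx f) := by
  funext p
  have hdf : Differentiable ℝ f := hf.differentiable two_ne_zero
  have hf' : ContDiff ℝ 1 (fderiv ℝ f) := hf.fderiv_right (le_of_eq (by norm_num))
  have hdf' : Differentiable ℝ (fderiv ℝ f) := hf'.differentiable one_ne_zero
  have hcx : HasDerivAt (fun s : ℝ => ((s, p.2) : ℝ × ℝ)) ((1 : ℝ), (0 : ℝ)) p.1 :=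
    (hasDerivAt_id p.1).prodMk (hasDerivAt_const p.1 p.2)
  have hcy : HasDerivAt (fun t : ℝ => ((p.1, t) : ℝ × ℝ)) ((0 : ℝ), (1 : ℝ)) p.2 :=
    (hasDerivAt_const p.2 p.1).prodMk (hasDerivAt_id p.2)
  have h2x : HasDerivAt (fun s : ℝ => fderiv ℝ f (s, p.2))
      (fderiv ℝ (fderiv ℝ f) p ((1 : ℝ), (0 : ℝ))) p.1 := by
    have := (hdf' p).hasFDerivAt.comp_hasDerivAt p.1 hcx
    simpa [Function.comp_def] using this
  have h2y : HasDerivAt (fun t : ℝ => fderiv ℝ f (p.1, t))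
      (fderiv ℝ (fderiv ℝ f) p ((0 : ℝ), (1 : ℝ))) p.2 := by
    have := (hdf' p).hasFDerivAt.comp_hasDerivAt p.2 hcy
    simpa [Function.comp_def] using this
  have e1 : pdx (pdy f) p = fderiv ℝ (fderiv ℝ f) p (1, 0) (0, 1) := by
    have hfun : (fun s : ℝ => pdy f (s, p.2)) = fun s => fderiv ℝ f (s, p.2) (0, 1) :=
      funext fun s => pdy_fderiv (hdf (s, p.2))
    have h3 : HasDerivAt (fun s : ℝ => fderiv ℝ f (s, p.2) (0, 1))
        (fderiv ℝ (fderiv ℝ f) p (1, 0) (0, 1)) p.1 := by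
      simpa using h2x.clm_apply (hasDerivAt_const p.1 ((0 : ℝ), (1 : ℝ)))
    show deriv (fun s : ℝ => pdy f (s, p.2)) p.1 = _
    rw [hfun]
    exact h3.deriv
  have e2 : pdy (pdx f) p = fderiv ℝ (fderiv ℝ f) p (0, 1) (1, 0) := by
    have hfun : (fun t : ℝ => pdx f (p.1, t)) = fun t => fderiv ℝ f (p.1, t) (1, 0) :=
      funext fun t => pdx_fderiv (hdf (p.1, t))
    have h3 : HasDerivAt (fun t : ℝ => fderiv ℝ f (p.1, t) (1, 0))
        (fderiv ℝ (fderiv ℝ f) p (0, 1) (1, 0)) p.2 := by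
      simpa using h2y.clm_apply (hasDerivAt_const p.2 ((1 : ℝ), (0 : ℝ)))
    show deriv (fun t : ℝ => pdx f (p.1, t)) p.2 = _
    rw [hfun]
    exact h3.deriv
  rw [e1, e2]
  exact second_derivative_symmetric (fun y => (hdf y).hasFDerivAt) ((hdf' p).hasFDerivAt) _ _

/-! ### Geometry and measure of the triangle -/

lemma tri_bounds {xi yj hx hy : ℝ} (hhx : 0 < hx) (hhy : 0 < hy) {p : ℝ × ℝ}
    (hp : p ∈ tri xi yj hx hy) :
    xi ≤ p.1 ∧ p.1 ≤ xi + hx ∧ yj ≤ p.2 ∧ p.2 ≤ yj + hy := by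
  obtain ⟨h1, h2, h3⟩ := hp
  have ha : 0 ≤ (p.2 - yj) / hy := div_nonneg (by linarith) hhy.le
  have hb : 0 ≤ (p.1 - xi) / hx := div_nonneg (by linarith) hhx.le
  have hc : (p.1 - xi) / hx ≤ 1 := by linarith
  have hd : (p.2 - yj) / hy ≤ 1 := by linarith
  have he := (div_le_one hhx).mp hc
  have hf := (div_le_one hhy).mp hd
  exact ⟨h1, by linarith, h2, by linarith⟩

lemma isClosed_tri (xi yj hx hy : ℝ) : IsClosed (tri xi yj hx hy) := by
  have : tri xi yj hx hy = {p : ℝ × ℝ | xi ≤ p.1} ∩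
      ({p : ℝ × ℝ | yj ≤ p.2} ∩ {p : ℝ × ℝ | (p.1 - xi) / hx + (p.2 - yj) / hy ≤ 1}) := rfl
  rw [this]
  refine (isClosed_le continuous_const continuous_fst).inter
    ((isClosed_le continuous_const continuous_snd).inter (isClosed_le ?_ continuous_const))
  exact ((continuous_fst.sub continuous_const).div_const hx).add
    ((continuous_snd.sub continuous_const).div_const hy)

lemma tri_subset_Icc {xi yj hx hy : ℝ} (hhx : 0 < hx) (hhy : 0 < hy) :
    tri xi yj hx hy ⊆ Icc (xi, yj) (xi + hx, yj + hy) := by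
  intro p hp
  obtain ⟨h1, h2, h3, h4⟩ := tri_bounds hhx hhy hp
  exact ⟨⟨h1, h3⟩, ⟨h2, h4⟩⟩

lemma isCompact_tri {xi yj hx hy : ℝ} (hhx : 0 < hx) (hhy : 0 < hy) :
    IsCompact (tri xi yj hx hy) :=
  IsCompact.of_isClosed_subset isCompact_Icc (isClosed_tri xi yj hx hy)
    (tri_subset_Icc hhx hhy)

lemma measurableSet_tri (xi yj hx hy : ℝ) : MeasurableSet (tri xi yj hx hy) :=
  (isClosed_tri xi yj hx hy).measurableSet

lemma volume_tri_le {xi yj hx hy : ℝ} (hhx : 0 < hx) (hhy : 0 < hy) :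
    (volume (tri xi yj hx hy)).toReal ≤ hx * hy := by
  have h1 : volume (tri xi yj hx hy) ≤ volume (Icc ((xi : ℝ), yj) (xi + hx, yj + hy)) :=
    measure_mono (tri_subset_Icc hhx hhy)
  have h2 : volume (Icc ((xi : ℝ), yj) (xi + hx, yj + hy)) = ENNReal.ofReal (hx * hy) := by
    rw [Icc_prod_eq, Measure.volume_eq_prod, Measure.prod_prod]
    simp only [Real.volume_Icc]
    rw [show xi + hx - xi = hx by ring, show yj + hy - yj = hy by ring,
      ← ENNReal.ofReal_mul hhx.le]
  refine ENNReal.toReal_le_of_le_ofReal (by positivity) ?_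
  rw [← h2]; exact h1

lemma volume_tri_lt_top {xi yj hx hy : ℝ} (hhx : 0 < hx) (hhy : 0 < hy) :
    volume (tri xi yj hx hy) < ⊤ :=
  (isCompact_tri hhx hhy).measure_lt_top

lemma continuous_interp (w : ℝ × ℝ → ℝ) (xi yj hx hy : ℝ) :
    Continuous (interp w xi yj hx hy) := by
  unfold interp
  fun_prop

lemma abs_interp_le {g : ℝ × ℝ → ℝ} {a b hx hy B : ℝ} (hhx : 0 < hx) (hhy : 0 < hy)
    (hB : ∀ p ∈ tri a b hx hy, |g p| ≤ B) :
    ∀ p ∈ tri a b hx hy, |interp g a b hx hy p| ≤ B := by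
  intro p hp
  obtain ⟨h1, h2, h3⟩ := hp
  have hl1 : 0 ≤ (p.1 - a) / hx := div_nonneg (by linarith) hhx.le
  have hl2 : 0 ≤ (p.2 - b) / hy := div_nonneg (by linarith) hhy.le
  have hl0 : 0 ≤ 1 - (p.1 - a) / hx - (p.2 - b) / hy := by linarith
  have v0 : ((a : ℝ), b) ∈ tri a b hx hy := by
    refine ⟨le_rfl, le_rfl, ?_⟩
    simp
  have v1 : ((a + hx : ℝ), b) ∈ tri a b hx hy := by
    refine ⟨?_, le_rfl, ?_⟩
    · show a ≤ a + hx; linarith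
    · show (a + hx - a) / hx + (b - b) / hy ≤ 1
      rw [show a + hx - a = hx by ring, div_self hhx.ne']
      simp
  have v2 : ((a : ℝ), b + hy) ∈ tri a b hx hy := by
    refine ⟨le_rfl, ?_, ?_⟩
    · show b ≤ b + hy; linarith
    · show (a - a) / hx + (b + hy - b) / hy ≤ 1
      rw [show b + hy - b = hy by ring, div_self hhy.ne']
      simp
  calc |interp g a b hx hy p|
      ≤ |g (a, b) * (1 - (p.1 - a) / hx - (p.2 - b) / hy)| + |g (a + hx, b) * ((p.1 - a) / hx)|
        + |g (a, b + hy) * ((p.2 - b) / hy)| := abs_add_three _ _ _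
    _ = |g (a, b)| * (1 - (p.1 - a) / hx - (p.2 - b) / hy) + |g (a + hx, b)| * ((p.1 - a) / hx)
        + |g (a, b + hy)| * ((p.2 - b) / hy) := by
        rw [abs_mul, abs_mul, abs_mul, abs_of_nonneg hl0, abs_of_nonneg hl1, abs_of_nonneg hl2]
    _ ≤ B * (1 - (p.1 - a) / hx - (p.2 - b) / hy) + B * ((p.1 - a) / hx)
        + B * ((p.2 - b) / hy) := by
        gcongr
        exacts [hB _ v0, hB _ v1, hB _ v2]
    _ = B := by ring

/-! ### Translation invariance and the quadratic cancellation -/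

lemma shift_integral {g : ℝ × ℝ → ℝ} (v : ℝ × ℝ) {A B : Set (ℝ × ℝ)}
    (mA : MeasurableSet A) (mB : MeasurableSet B) (hAB : ∀ p, p ∈ A ↔ p + v ∈ B) :
    ∫ p in A, g p = ∫ p in B, g (p - v) := by
  rw [← integral_indicator mA, ← integral_indicator mB]
  have key : ∀ p, A.indicator g p = B.indicator (fun q => g (q - v)) (p + v) := by
    intro p
    by_cases h : p ∈ A
    · rw [indicator_of_mem h, indicator_of_mem ((hAB p).1 h)]
      simp
    · rw [indicator_of_notMem h, indicator_of_notMem (fun hc => h ((hAB p).2 hc))]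
  calc ∫ p, A.indicator g p
      = ∫ p, B.indicator (fun q => g (q - v)) (p + v) := by simp_rw [key]
    _ = ∫ p, B.indicator (fun q => g (q - v)) p := integral_add_right_eq_self _ v

lemma keyP {xi yj hx hy c00 c10 c01 c20 c11 c02 : ℝ} (hhx : hx ≠ 0) (hhy : hy ≠ 0)
    (P : ℝ × ℝ → ℝ)
    (hP : P = fun p => c00 + c10 * (p.1 - xi) + c01 * (p.2 - yj) + c20 / 2 * (p.1 - xi) ^ 2
      + c11 * (p.1 - xi) * (p.2 - yj) + c02 / 2 * (p.2 - yj) ^ 2) :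
    ∀ q : ℝ × ℝ, P (q - ((hx, 0) : ℝ × ℝ)) - interp P (xi - hx) yj hx hy (q - (hx, 0))
      = P q - interp P xi yj hx hy q := by
  intro q
  simp only [hP, interp, Prod.fst_sub, Prod.snd_sub]
  field_simp
  ring

lemma four_bound {W s1 s2 s3 s4 u1 u2 u3 u4 c d : ℝ} (hW : W = s1 + s2 + c * s3 + d * s4)
    (h1 : |s1| ≤ u1) (h2 : |s2| ≤ u2) (h3 : |c| * |s3| ≤ u3) (h4 : |d| * |s4| ≤ u4) :
    |W| ≤ u1 + u2 + u3 + u4 := by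
  rw [hW]
  calc |s1 + s2 + c * s3 + d * s4| ≤ |s1| + |s2| + |c * s3| + |d * s4| := by
        have ha := abs_add_le (s1 + s2 + c * s3) (d * s4)
        have hb := abs_add_three s1 s2 (c * s3)
        linarith
    _ ≤ u1 + u2 + u3 + u4 := by
        simp only [abs_mul]
        linarith

set_option maxHeartbeats 2000000 in
/-- Cancellation between the two translated triangles `K_{i-1}` and `K_i`:
only third-order remainders survive. -/
theorem stmt1 :
    ∃ C > 0, ∀ (w : ℝ × ℝ → ℝ) (xi yj hx hy M30 M21 M12 M03 : ℝ),
      0 < hx → 0 < hy → ContDiff ℝ 3 w →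
      (∀ p ∈ tri (xi - hx) yj hx hy ∪ tri xi yj hx hy, |pdx (pdx (pdx w)) p| ≤ M30) →
      (∀ p ∈ tri (xi - hx) yj hx hy ∪ tri xi yj hx hy, |pdy (pdx (pdx w)) p| ≤ M21) →
      (∀ p ∈ tri (xi - hx) yj hx hy ∪ tri xi yj hx hy, |pdy (pdy (pdx w)) p| ≤ M12) →
      (∀ p ∈ tri (xi - hx) yj hx hy ∪ tri xi yj hx hy, |pdy (pdy (pdy w)) p| ≤ M03) →
      |(∫ p in tri (xi - hx) yj hx hy, (w p - interp w (xi - hx) yj hx hy p))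
        - ∫ p in tri xi yj hx hy, (w p - interp w xi yj hx hy p)|
      ≤ C * (hx ^ 4 * hy * M30 + hx ^ 3 * hy ^ 2 * M21
          + hx ^ 2 * hy ^ 3 * M12 + hx * hy ^ 4 * M03) := by
  refine ⟨4, by norm_num, ?_⟩
  intro w xi yj hx hy M30 M21 M12 M03 hhx hhy hw h30 h21 h12 h03
  -- smoothness bookkeeping
  have hw2 : ContDiff ℝ 2 w := hw.of_le (by norm_num)
  have hdw : Differentiable ℝ w := hw.differentiable (by norm_num)
  have hpx2 : ContDiff ℝ 2 (pdx w) := contDiff_pdx (n := 2) (by exact_mod_cast hw)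
  have hpy2 : ContDiff ℝ 2 (pdy w) := contDiff_pdy (n := 2) (by exact_mod_cast hw)
  have hdpx : Differentiable ℝ (pdx w) := hpx2.differentiable two_ne_zero
  have hdpy : Differentiable ℝ (pdy w) := hpy2.differentiable two_ne_zero
  have hpxx1 : ContDiff ℝ 1 (pdx (pdx w)) := contDiff_pdx (n := 1) (by exact_mod_cast hpx2)
  have hpyx1 : ContDiff ℝ 1 (pdy (pdx w)) := contDiff_pdy (n := 1) (by exact_mod_cast hpx2)
  have hpyy1 : ContDiff ℝ 1 (pdy (pdy w)) := contDiff_pdy (n := 1) (by exact_mod_cast hpy2)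
  have hpxy1 : ContDiff ℝ 1 (pdx (pdy w)) := contDiff_pdx (n := 1) (by exact_mod_cast hpy2)
  have hdpxx : Differentiable ℝ (pdx (pdx w)) := hpxx1.differentiable one_ne_zero
  have hdpyx : Differentiable ℝ (pdy (pdx w)) := hpyx1.differentiable one_ne_zero
  have hdpyy : Differentiable ℝ (pdy (pdy w)) := hpyy1.differentiable one_ne_zero
  have hdpxy : Differentiable ℝ (pdx (pdy w)) := hpxy1.differentiable one_ne_zero
  -- Clairaut symmetries
  have cl1 : pdx (pdy w) = pdy (pdx w) := clairaut hw2
  have clE2 : pdx (pdx (pdy w)) = pdy (pdx (pdx w)) := by rw [cl1]; exact clairaut hpx2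
  have clE3 : pdx (pdy (pdy w)) = pdy (pdy (pdx w)) := by rw [clairaut hpy2, cl1]
  -- corner of both triangles
  have q0mem : ((xi : ℝ), yj) ∈ tri xi yj hx hy := ⟨le_rfl, le_rfl, by simp⟩
  have hM30 : 0 ≤ M30 := le_trans (abs_nonneg _) (h30 (xi, yj) (Or.inr q0mem))
  have hM21 : 0 ≤ M21 := le_trans (abs_nonneg _) (h21 (xi, yj) (Or.inr q0mem))
  have hM12 : 0 ≤ M12 := le_trans (abs_nonneg _) (h12 (xi, yj) (Or.inr q0mem))
  have hM03 : 0 ≤ M03 := le_trans (abs_nonneg _) (h03 (xi, yj) (Or.inr q0mem))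
  -- the quadratic Taylor polynomial at the common corner (xi, yj)
  set P : ℝ × ℝ → ℝ := fun p => w (xi, yj) + pdx w (xi, yj) * (p.1 - xi)
    + pdy w (xi, yj) * (p.2 - yj) + pdx (pdx w) (xi, yj) / 2 * (p.1 - xi) ^ 2
    + pdy (pdx w) (xi, yj) * (p.1 - xi) * (p.2 - yj)
    + pdy (pdy w) (xi, yj) / 2 * (p.2 - yj) ^ 2 with hP
  set B : ℝ := M30 * hx ^ 3 + M03 * hy ^ 3 + M12 * (hx * hy ^ 2) + M21 * (hx ^ 2 * hy) with hB
  have hBnn : 0 ≤ B := by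
    have := mul_nonneg hM30 (by positivity : (0:ℝ) ≤ hx ^ 3)
    have := mul_nonneg hM03 (by positivity : (0:ℝ) ≤ hy ^ 3)
    have := mul_nonneg hM12 (by positivity : (0:ℝ) ≤ hx * hy ^ 2)
    have := mul_nonneg hM21 (by positivity : (0:ℝ) ≤ hx ^ 2 * hy)
    rw [hB]; linarith
  -- pointwise bound on the right triangle K_i
  have keyB : ∀ p ∈ tri xi yj hx hy, |w p - P p| ≤ B := by
    rintro ⟨x, y⟩ hp
    obtain ⟨h1, h2, h3⟩ := hp
    replace h1 : xi ≤ x := h1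
    replace h2 : yj ≤ y := h2
    replace h3 : (x - xi) / hx + (y - yj) / hy ≤ 1 := h3
    have hy0 : 0 ≤ (y - yj) / hy := div_nonneg (by linarith) hhy.le
    have hx0 : 0 ≤ (x - xi) / hx := div_nonneg (by linarith) hhx.le
    have hxb : x ≤ xi + hx := by
      have := (div_le_one hhx).mp (by linarith : (x - xi) / hx ≤ 1); linarith
    have hyb : y ≤ yj + hy := by
      have := (div_le_one hhy).mp (by linarith : (y - yj) / hy ≤ 1); linarith
    have memh : ∀ s ∈ uIcc xi x, ((s : ℝ), y) ∈ tri xi yj hx hy := by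
      intro s hs
      rw [uIcc_of_le h1] at hs
      refine ⟨hs.1, h2, ?_⟩
      have : (s - xi) / hx ≤ (x - xi) / hx := by gcongr; exact hs.2
      linarith
    have memv : ∀ t ∈ uIcc yj y, ((xi : ℝ), t) ∈ tri xi yj hx hy := by
      intro t ht
      rw [uIcc_of_le h2] at ht
      refine ⟨le_rfl, ht.1, ?_⟩
      have h0 : (xi - xi) / hx = 0 := by simp
      have hle : (t - yj) / hy ≤ (y - yj) / hy := by gcongr; exact ht.2
      linarith
    have step1 : |w (x, y) - w (xi, y) - (x - xi) * pdx w (xi, y)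
        - (x - xi) ^ 2 / 2 * pdx (pdx w) (xi, y)| ≤ M30 * |x - xi| ^ 3 :=
      taylor3 (fun s => hasDerivAt_slice_x hdw s y) (fun s => hasDerivAt_slice_x hdpx s y)
        (fun s => hasDerivAt_slice_x hdpxx s y)
        (fun s hs => h30 _ (Or.inr (memh s hs)))
    have step2 : |w (xi, y) - w (xi, yj) - (y - yj) * pdy w (xi, yj)
        - (y - yj) ^ 2 / 2 * pdy (pdy w) (xi, yj)| ≤ M03 * |y - yj| ^ 3 :=
      taylor3 (fun t => hasDerivAt_slice_y hdw xi t) (fun t => hasDerivAt_slice_y hdpy xi t)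
        (fun t => hasDerivAt_slice_y hdpyy xi t)
        (fun t ht => h03 _ (Or.inr (memv t ht)))
    have step3 : |pdx w (xi, y) - pdx w (xi, yj) - (y - yj) * pdy (pdx w) (xi, yj)|
        ≤ M12 * |y - yj| ^ 2 :=
      taylor2 (fun t => hasDerivAt_slice_y hdpx xi t) (fun t => hasDerivAt_slice_y hdpyx xi t)
        (fun t ht => h12 _ (Or.inr (memv t ht)))
    have step4 : |pdx (pdx w) (xi, y) - pdx (pdx w) (xi, yj)| ≤ M21 * |y - yj| :=
      taylor1 (fun t => hasDerivAt_slice_y hdpxx xi t)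
        (fun t ht => h21 _ (Or.inr (memv t ht)))
    have t1 : |x - xi| ≤ hx := abs_le.mpr ⟨by linarith, by linarith⟩
    have t2 : |y - yj| ≤ hy := abs_le.mpr ⟨by linarith, by linarith⟩
    have p1 : |x - xi| ^ 3 ≤ hx ^ 3 := pow_le_pow_left₀ (abs_nonneg _) t1 3
    have p2 : |y - yj| ^ 3 ≤ hy ^ 3 := pow_le_pow_left₀ (abs_nonneg _) t2 3
    have p3 : |y - yj| ^ 2 ≤ hy ^ 2 := pow_le_pow_left₀ (abs_nonneg _) t2 2
    have decomp : w (x, y) - P (x, y) =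
        (w (x, y) - w (xi, y) - (x - xi) * pdx w (xi, y)
          - (x - xi) ^ 2 / 2 * pdx (pdx w) (xi, y))
      + (w (xi, y) - w (xi, yj) - (y - yj) * pdy w (xi, yj)
          - (y - yj) ^ 2 / 2 * pdy (pdy w) (xi, yj))
      + (x - xi) * (pdx w (xi, y) - pdx w (xi, yj) - (y - yj) * pdy (pdx w) (xi, yj))
      + (x - xi) ^ 2 / 2 * (pdx (pdx w) (xi, y) - pdx (pdx w) (xi, yj)) := by
      simp only [hP]; ring
    have u1 : |w (x, y) - w (xi, y) - (x - xi) * pdx w (xi, y)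
        - (x - xi) ^ 2 / 2 * pdx (pdx w) (xi, y)| ≤ M30 * hx ^ 3 :=
      step1.trans (mul_le_mul_of_nonneg_left p1 hM30)
    have u2 : |w (xi, y) - w (xi, yj) - (y - yj) * pdy w (xi, yj)
        - (y - yj) ^ 2 / 2 * pdy (pdy w) (xi, yj)| ≤ M03 * hy ^ 3 :=
      step2.trans (mul_le_mul_of_nonneg_left p2 hM03)
    have u3 : |x - xi| * |pdx w (xi, y) - pdx w (xi, yj) - (y - yj) * pdy (pdx w) (xi, yj)|
        ≤ hx * (M12 * hy ^ 2) :=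
      mul_le_mul t1 (step3.trans (mul_le_mul_of_nonneg_left p3 hM12)) (abs_nonneg _) hhx.le
    have u4 : |(x - xi) ^ 2 / 2| * |pdx (pdx w) (xi, y) - pdx (pdx w) (xi, yj)|
        ≤ hx ^ 2 / 2 * (M21 * hy) := by
      have hd : |(x - xi) ^ 2 / 2| = (x - xi) ^ 2 / 2 := abs_of_nonneg (by positivity)
      rw [hd]
      have hsq : (x - xi) ^ 2 / 2 ≤ hx ^ 2 / 2 := by
        have h1 := sq_abs (x - xi)
        have h2 : |x - xi| ^ 2 ≤ hx ^ 2 := pow_le_pow_left₀ (abs_nonneg _) t1 2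
        linarith
      exact mul_le_mul hsq (step4.trans (mul_le_mul_of_nonneg_left t2 hM21))
        (abs_nonneg _) (by positivity)
    have habs := four_bound decomp u1 u2 u3 u4
    have hfin : M30 * hx ^ 3 + M03 * hy ^ 3 + hx * (M12 * hy ^ 2) + hx ^ 2 / 2 * (M21 * hy)
        ≤ B := by
      have hnn : 0 ≤ M21 * (hx ^ 2 * hy) := mul_nonneg hM21 (by positivity)
      rw [hB]; nlinarith [hnn]
    exact habs.trans hfin
  -- pointwise bound on the left triangle K_{i-1}
  have keyA : ∀ p ∈ tri (xi - hx) yj hx hy, |w p - P p| ≤ B := by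
    rintro ⟨x, y⟩ hp
    obtain ⟨h1, h2, h3⟩ := hp
    replace h1 : xi - hx ≤ x := h1
    replace h2 : yj ≤ y := h2
    replace h3 : (x - (xi - hx)) / hx + (y - yj) / hy ≤ 1 := h3
    have hy0 : 0 ≤ (y - yj) / hy := div_nonneg (by linarith) hhy.le
    have hx0 : 0 ≤ (x - (xi - hx)) / hx := div_nonneg (by linarith) hhx.le
    have hxb : x ≤ xi := by
      have := (div_le_one hhx).mp (by linarith : (x - (xi - hx)) / hx ≤ 1); linarith
    have hyb : y ≤ yj + hy := by
      have := (div_le_one hhy).mp (by linarith : (y - yj) / hy ≤ 1); linarith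
    have memv : ∀ t ∈ uIcc yj y, ((x : ℝ), t) ∈ tri (xi - hx) yj hx hy := by
      intro t ht
      rw [uIcc_of_le h2] at ht
      refine ⟨h1, ht.1, ?_⟩
      have hle : (t - yj) / hy ≤ (y - yj) / hy := by gcongr; exact ht.2
      linarith
    have memh : ∀ s ∈ uIcc xi x, ((s : ℝ), yj) ∈ tri (xi - hx) yj hx hy := by
      intro s hs
      rw [uIcc_of_ge hxb] at hs
      refine ⟨by linarith [hs.1], le_rfl, ?_⟩
      have h0 : (yj - yj) / hy = 0 := by simp
      have hle : (s - (xi - hx)) / hx ≤ 1 := (div_le_one hhx).mpr (by linarith [hs.2])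
      linarith
    have step1 : |w (x, y) - w (x, yj) - (y - yj) * pdy w (x, yj)
        - (y - yj) ^ 2 / 2 * pdy (pdy w) (x, yj)| ≤ M03 * |y - yj| ^ 3 :=
      taylor3 (fun t => hasDerivAt_slice_y hdw x t) (fun t => hasDerivAt_slice_y hdpy x t)
        (fun t => hasDerivAt_slice_y hdpyy x t)
        (fun t ht => h03 _ (Or.inl (memv t ht)))
    have step2 : |w (x, yj) - w (xi, yj) - (x - xi) * pdx w (xi, yj)
        - (x - xi) ^ 2 / 2 * pdx (pdx w) (xi, yj)| ≤ M30 * |x - xi| ^ 3 :=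
      taylor3 (fun s => hasDerivAt_slice_x hdw s yj) (fun s => hasDerivAt_slice_x hdpx s yj)
        (fun s => hasDerivAt_slice_x hdpxx s yj)
        (fun s hs => h30 _ (Or.inl (memh s hs)))
    have step3 : |pdy w (x, yj) - pdy w (xi, yj) - (x - xi) * pdx (pdy w) (xi, yj)|
        ≤ M21 * |x - xi| ^ 2 :=
      taylor2 (fun s => hasDerivAt_slice_x hdpy s yj) (fun s => hasDerivAt_slice_x hdpxy s yj)
        (fun s hs => by
          have := h21 _ (Or.inl (memh s hs))
          rwa [← congrFun clE2 ((s : ℝ), yj)] at this)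
    have step4 : |pdy (pdy w) (x, yj) - pdy (pdy w) (xi, yj)| ≤ M12 * |x - xi| :=
      taylor1 (fun s => hasDerivAt_slice_x hdpyy s yj)
        (fun s hs => by
          have := h12 _ (Or.inl (memh s hs))
          rwa [← congrFun clE3 ((s : ℝ), yj)] at this)
    have t1 : |x - xi| ≤ hx := abs_le.mpr ⟨by linarith, by linarith⟩
    have t2 : |y - yj| ≤ hy := abs_le.mpr ⟨by linarith, by linarith⟩
    have p1 : |x - xi| ^ 3 ≤ hx ^ 3 := pow_le_pow_left₀ (abs_nonneg _) t1 3
    have p2 : |y - yj| ^ 3 ≤ hy ^ 3 := pow_le_pow_left₀ (abs_nonneg _) t2 3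
    have p3 : |x - xi| ^ 2 ≤ hx ^ 2 := pow_le_pow_left₀ (abs_nonneg _) t1 2
    have hc11 : pdx (pdy w) (xi, yj) = pdy (pdx w) (xi, yj) := congrFun cl1 (xi, yj)
    have decomp : w (x, y) - P (x, y) =
        (w (x, y) - w (x, yj) - (y - yj) * pdy w (x, yj)
          - (y - yj) ^ 2 / 2 * pdy (pdy w) (x, yj))
      + (w (x, yj) - w (xi, yj) - (x - xi) * pdx w (xi, yj)
          - (x - xi) ^ 2 / 2 * pdx (pdx w) (xi, yj))
      + (y - yj) * (pdy w (x, yj) - pdy w (xi, yj) - (x - xi) * pdx (pdy w) (xi, yj))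
      + (y - yj) ^ 2 / 2 * (pdy (pdy w) (x, yj) - pdy (pdy w) (xi, yj)) := by
      simp only [hP]; rw [hc11]; ring
    have u1 : |w (x, y) - w (x, yj) - (y - yj) * pdy w (x, yj)
        - (y - yj) ^ 2 / 2 * pdy (pdy w) (x, yj)| ≤ M03 * hy ^ 3 :=
      step1.trans (mul_le_mul_of_nonneg_left p2 hM03)
    have u2 : |w (x, yj) - w (xi, yj) - (x - xi) * pdx w (xi, yj)
        - (x - xi) ^ 2 / 2 * pdx (pdx w) (xi, yj)| ≤ M30 * hx ^ 3 :=
      step2.trans (mul_le_mul_of_nonneg_left p1 hM30)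
    have u3 : |y - yj| * |pdy w (x, yj) - pdy w (xi, yj) - (x - xi) * pdx (pdy w) (xi, yj)|
        ≤ hy * (M21 * hx ^ 2) :=
      mul_le_mul t2 (step3.trans (mul_le_mul_of_nonneg_left p3 hM21)) (abs_nonneg _) hhy.le
    have u4 : |(y - yj) ^ 2 / 2| * |pdy (pdy w) (x, yj) - pdy (pdy w) (xi, yj)|
        ≤ hy ^ 2 / 2 * (M12 * hx) := by
      have hd : |(y - yj) ^ 2 / 2| = (y - yj) ^ 2 / 2 := abs_of_nonneg (by positivity)
      rw [hd]
      have hsq : (y - yj) ^ 2 / 2 ≤ hy ^ 2 / 2 := by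
        have h1 := sq_abs (y - yj)
        have hq : |y - yj| ^ 2 ≤ hy ^ 2 := pow_le_pow_left₀ (abs_nonneg _) t2 2
        linarith
      exact mul_le_mul hsq (step4.trans (mul_le_mul_of_nonneg_left t1 hM12))
        (abs_nonneg _) (by positivity)
    have habs := four_bound decomp u1 u2 u3 u4
    have hfin : M03 * hy ^ 3 + M30 * hx ^ 3 + hy * (M21 * hx ^ 2) + hy ^ 2 / 2 * (M12 * hx)
        ≤ B := by
      have hnn : 0 ≤ M12 * (hx * hy ^ 2) := mul_nonneg hM12 (by positivity)
      rw [hB]; nlinarith [hnn]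
    exact habs.trans hfin
  -- abbreviations
  have mA : MeasurableSet (tri (xi - hx) yj hx hy) := measurableSet_tri _ _ _ _
  have mB : MeasurableSet (tri xi yj hx hy) := measurableSet_tri _ _ _ _
  have cptA : IsCompact (tri (xi - hx) yj hx hy) := isCompact_tri hhx hhy
  have cptB : IsCompact (tri xi yj hx hy) := isCompact_tri hhx hhy
  have contP : Continuous P := by rw [hP]; fun_prop
  have contw : Continuous w := hw.continuous
  -- the remainder functions
  set rA : ℝ × ℝ → ℝ := fun p => (w p - P p)
    - interp (fun q => w q - P q) (xi - hx) yj hx hy p with hrA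
  set rB : ℝ × ℝ → ℝ := fun p => (w p - P p)
    - interp (fun q => w q - P q) xi yj hx hy p with hrB
  have contrA : Continuous rA := by
    rw [hrA]; exact (contw.sub contP).sub (continuous_interp _ _ _ _ _)
  have contrB : Continuous rB := by
    rw [hrB]; exact (contw.sub contP).sub (continuous_interp _ _ _ _ _)
  -- integrability
  have intPA : IntegrableOn (fun p => P p - interp P (xi - hx) yj hx hy p)
      (tri (xi - hx) yj hx hy) volume :=
    ((contP.sub (continuous_interp _ _ _ _ _)).continuousOn).integrableOn_compact cptA
  have intPB : IntegrableOn (fun p => P p - interp P xi yj hx hy p)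
      (tri xi yj hx hy) volume :=
    ((contP.sub (continuous_interp _ _ _ _ _)).continuousOn).integrableOn_compact cptB
  have intRA : IntegrableOn rA (tri (xi - hx) yj hx hy) volume :=
    contrA.continuousOn.integrableOn_compact cptA
  have intRB : IntegrableOn rB (tri xi yj hx hy) volume :=
    contrB.continuousOn.integrableOn_compact cptB
  -- splitting of the integrands
  have splitA : ∫ p in tri (xi - hx) yj hx hy, (w p - interp w (xi - hx) yj hx hy p)
      = (∫ p in tri (xi - hx) yj hx hy, (P p - interp P (xi - hx) yj hx hy p))
        + ∫ p in tri (xi - hx) yj hx hy, rA p := by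
    rw [← integral_add intPA intRA]
    apply setIntegral_congr_fun mA
    intro p _
    simp only [hrA, interp]
    ring
  have splitB : ∫ p in tri xi yj hx hy, (w p - interp w xi yj hx hy p)
      = (∫ p in tri xi yj hx hy, (P p - interp P xi yj hx hy p))
        + ∫ p in tri xi yj hx hy, rB p := by
    rw [← integral_add intPB intRB]
    apply setIntegral_congr_fun mB
    intro p _
    simp only [hrB, interp]
    ring
  -- exact cancellation of the quadratic polynomial part by translation
  have hAB : ∀ p : ℝ × ℝ, p ∈ tri (xi - hx) yj hx hy ↔
      p + ((hx, 0) : ℝ × ℝ) ∈ tri xi yj hx hy := by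
    intro p
    have e1 : (p + ((hx, 0) : ℝ × ℝ)).1 = p.1 + hx := rfl
    have e2 : (p + ((hx, 0) : ℝ × ℝ)).2 = p.2 + 0 := rfl
    simp only [tri, mem_setOf_eq, e1, e2, add_zero]
    constructor
    · rintro ⟨h1, h2, h3⟩
      refine ⟨by linarith, h2, ?_⟩
      rw [show p.1 + hx - xi = p.1 - (xi - hx) by ring]
      exact h3
    · rintro ⟨h1, h2, h3⟩
      refine ⟨by linarith, h2, ?_⟩
      rw [show p.1 - (xi - hx) = p.1 + hx - xi by ring]
      exact h3
  have PeqAB : ∫ p in tri (xi - hx) yj hx hy, (P p - interp P (xi - hx) yj hx hy p)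
      = ∫ p in tri xi yj hx hy, (P p - interp P xi yj hx hy p) := by
    rw [shift_integral ((hx, 0) : ℝ × ℝ) mA mB hAB]
    apply setIntegral_congr_fun mB
    intro q _
    exact keyP hhx.ne' hhy.ne' P hP q
  -- bounds on the remainder integrals
  have boundRA : ∀ p ∈ tri (xi - hx) yj hx hy, |rA p| ≤ 2 * B := by
    intro p hp
    have h1 := keyA p hp
    have h2 := abs_interp_le hhx hhy keyA p hp
    calc |rA p| ≤ |w p - P p| + |interp (fun q => w q - P q) (xi - hx) yj hx hy p| := by
          rw [hrA]; exact abs_sub _ _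
      _ ≤ 2 * B := by linarith
  have boundRB : ∀ p ∈ tri xi yj hx hy, |rB p| ≤ 2 * B := by
    intro p hp
    have h1 := keyB p hp
    have h2 := abs_interp_le hhx hhy keyB p hp
    calc |rB p| ≤ |w p - P p| + |interp (fun q => w q - P q) xi yj hx hy p| := by
          rw [hrB]; exact abs_sub _ _
      _ ≤ 2 * B := by linarith
  have intboundA : |∫ p in tri (xi - hx) yj hx hy, rA p| ≤ 2 * B * (hx * hy) := by
    have h := norm_setIntegral_le_of_norm_le_const (μ := volume)
      (s := tri (xi - hx) yj hx hy) (C := 2 * B) (volume_tri_lt_top hhx hhy)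
      (fun p hp => by rw [Real.norm_eq_abs]; exact boundRA p hp)
    rw [Real.norm_eq_abs] at h
    refine h.trans ?_
    exact mul_le_mul_of_nonneg_left (volume_tri_le hhx hhy) (by linarith)
  have intboundB : |∫ p in tri xi yj hx hy, rB p| ≤ 2 * B * (hx * hy) := by
    have h := norm_setIntegral_le_of_norm_le_const (μ := volume)
      (s := tri xi yj hx hy) (C := 2 * B) (volume_tri_lt_top hhx hhy)
      (fun p hp => by rw [Real.norm_eq_abs]; exact boundRB p hp)
    rw [Real.norm_eq_abs] at h
    refine h.trans ?_
    exact mul_le_mul_of_nonneg_left (volume_tri_le hhx hhy) (by linarith)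
  -- final assembly
  rw [splitA, splitB, PeqAB]
  have hdiff : (∫ p in tri xi yj hx hy, (P p - interp P xi yj hx hy p))
        + (∫ p in tri (xi - hx) yj hx hy, rA p)
      - ((∫ p in tri xi yj hx hy, (P p - interp P xi yj hx hy p))
        + ∫ p in tri xi yj hx hy, rB p)
      = (∫ p in tri (xi - hx) yj hx hy, rA p) - ∫ p in tri xi yj hx hy, rB p := by ring
  rw [hdiff]
  calc |(∫ p in tri (xi - hx) yj hx hy, rA p) - ∫ p in tri xi yj hx hy, rB p|
      ≤ |∫ p in tri (xi - hx) yj hx hy, rA p| + |∫ p in tri xi yj hx hy, rB p| := abs_sub _ _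
    _ ≤ 2 * B * (hx * hy) + 2 * B * (hx * hy) := add_le_add intboundA intboundB
    _ = 4 * (hx ^ 4 * hy * M30 + hx ^ 3 * hy ^ 2 * M21
          + hx ^ 2 * hy ^ 3 * M12 + hx * hy ^ 4 * M03) := by rw [hB]; ring
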